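/- For any second-level sequent Ψ ⇛ Φ, the following six conditions are equivalent: (1) there is a finite set Σ of formulas such that for every GL-model ⟨W,R,V⟩ and every Σ-reflexive world w ∈ W, the sequent Ψ ⇛ Φ is true at w; (2) for every GL-model ⟨W,R,V⟩ there is a finite set Σ of formulas such that the sequent Ψ ⇛ Φ is true at every Σ-reflexive world w ∈ W; (3) for every GL-model ⟨W,R,V⟩ and every infinitely descending sequence w₁ R⁻¹ w₂ R⁻¹ w₃ ⋯ in W, there is a number i such that for every j ≥ i the sequent Ψ ⇛ Φ is true at w_j; (4) for every GL-model ⟨W,R,V⟩ and every infinitely descending sequence w₁ R⁻¹ w₂ R⁻¹ w₃ ⋯ in W, there is a number i such that the sequent Ψ ⇛ Φ is true at w_i; (5) Ψ ⇛ Φ is cut-free provable in GLS_seq; (6) Ψ ⇛ Φ is provable in GLS_seq. -/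

import Mathlib

/-- Modal formulas: propositional variables, ⊥, →, □. -/
inductive Formula : Type
  | var : ℕ → Formula
  | bot : Formula
  | imp : Formula → Formula → Formula
  | box : Formula → Formula
deriving DecidableEq

/-- Levels of sequents in GLS_seq: first level (⇒) and second level (⇛). -/
inductive SeqLevel : Type
  | one
  | two
deriving DecidableEq

/-- The set of subformulas of a formula. -/
def Formula.subf : Formula → Finset Formula
  | .var p => {.var p}
  | .bot => {.bot}
  | .imp φ ψ => insert (.imp φ ψ) (φ.subf ∪ ψ.subf)
  | .box φ => insert (.box φ) φ.subf

/-- SF(Ψ,Φ): all subformulas of formulas in Ψ ∪ Φ. -/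
def SF (Ψ Φ : Finset Formula) : Finset Formula := (Ψ ∪ Φ).biUnion Formula.subf

def Formula.isBox : Formula → Bool
  | .box _ => true
  | _ => false

def Formula.unbox : Formula → Formula
  | .box φ => φ
  | φ => φ

/-- Θ_□ = {φ : □φ ∈ Θ}. -/
def boxInv (Θ : Finset Formula) : Finset Formula :=
  (Θ.filter fun ψ => ψ.isBox).image Formula.unbox

/-- The sequent calculus GLS_seq, on sequents of two levels.  The Bool parameter
records whether the cut rule may be used: `GLSSeq true` is provability in GLS_seq,
`GLSSeq false` is cut-free provability.  The first-level fragment is exactly GL_seq. -/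
inductive GLSSeq : Bool → SeqLevel → Finset Formula → Finset Formula → Prop
  | init (c lv φ) : GLSSeq c lv {φ} {φ}
  | initBot (c lv) : GLSSeq c lv {Formula.bot} ∅
  | cut {lv Γ Δ} (φ) : GLSSeq true lv Γ (insert φ Δ) → GLSSeq true lv (insert φ Γ) Δ →
      GLSSeq true lv Γ Δ
  | weak {c lv Γ Δ Γ' Δ'} : Γ ⊆ Γ' → Δ ⊆ Δ' → GLSSeq c lv Γ Δ → GLSSeq c lv Γ' Δ'
  | impL {c lv Γ Δ φ ψ} : GLSSeq c lv Γ (insert φ Δ) → GLSSeq c lv (insert ψ Γ) Δ →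
      GLSSeq c lv (insert (.imp φ ψ) Γ) Δ
  | impR {c lv Γ Δ φ ψ} : GLSSeq c lv (insert φ Γ) (insert ψ Δ) →
      GLSSeq c lv Γ (insert (.imp φ ψ) Δ)
  | boxGL {c Γ φ} : GLSSeq c .one (Γ ∪ Γ.image .box ∪ {.box φ}) {φ} →
      GLSSeq c .one (Γ.image .box) {.box φ}
  | boxL {c Γ Δ} (φ) : GLSSeq c .two (insert φ Γ) Δ → GLSSeq c .two (insert (.box φ) Γ) Δ
  | lift {c Γ Δ} : GLSSeq c .one Γ Δ → GLSSeq c .two Γ Δ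

/-- The sequent calculus GL_seq (on first-level sequents only). -/
inductive GLSeq : Bool → Finset Formula → Finset Formula → Prop
  | init (c φ) : GLSeq c {φ} {φ}
  | initBot (c) : GLSeq c {Formula.bot} ∅
  | cut {Γ Δ} (φ) : GLSeq true Γ (insert φ Δ) → GLSeq true (insert φ Γ) Δ → GLSeq true Γ Δ
  | weak {c Γ Δ Γ' Δ'} : Γ ⊆ Γ' → Δ ⊆ Δ' → GLSeq c Γ Δ → GLSeq c Γ' Δ'
  | impL {c Γ Δ φ ψ} : GLSeq c Γ (insert φ Δ) → GLSeq c (insert ψ Γ) Δ →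
      GLSeq c (insert (.imp φ ψ) Γ) Δ
  | impR {c Γ Δ φ ψ} : GLSeq c (insert φ Γ) (insert ψ Δ) → GLSeq c Γ (insert (.imp φ ψ) Δ)
  | boxGL {c Γ φ} : GLSeq c (Γ ∪ Γ.image .box ∪ {.box φ}) {φ} → GLSeq c (Γ.image .box) {.box φ}

/-- Proof trees of GLS_seq (cut included). -/
inductive GLSTree : SeqLevel → Finset Formula → Finset Formula → Type
  | init (lv φ) : GLSTree lv {φ} {φ}
  | initBot (lv) : GLSTree lv {Formula.bot} ∅
  | cut {lv Γ Δ} (φ) : GLSTree lv Γ (insert φ Δ) → GLSTree lv (insert φ Γ) Δ → GLSTree lv Γ Δ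
  | weak {lv Γ Δ} (Γ' Δ' : Finset Formula) : Γ ⊆ Γ' → Δ ⊆ Δ' → GLSTree lv Γ Δ → GLSTree lv Γ' Δ'
  | impL {lv Γ Δ} (φ ψ) : GLSTree lv Γ (insert φ Δ) → GLSTree lv (insert ψ Γ) Δ →
      GLSTree lv (insert (.imp φ ψ) Γ) Δ
  | impR {lv Γ Δ} (φ ψ) : GLSTree lv (insert φ Γ) (insert ψ Δ) → GLSTree lv Γ (insert (.imp φ ψ) Δ)
  | boxGL (Γ φ) : GLSTree .one (Γ ∪ Γ.image .box ∪ {.box φ}) {φ} → GLSTree .one (Γ.image .box) {.box φ}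
  | boxL {Γ Δ} (φ) : GLSTree .two (insert φ Γ) Δ → GLSTree .two (insert (.box φ) Γ) Δ
  | lift {Γ Δ} : GLSTree .one Γ Δ → GLSTree .two Γ Δ

/-- The set of principal formulas of all (□L) rules occurring in a proof tree. -/
def GLSTree.principals : ∀ {lv Γ Δ}, GLSTree lv Γ Δ → Finset Formula
  | _, _, _, .init _ _ => ∅
  | _, _, _, .initBot _ => ∅
  | _, _, _, .cut _ t₁ t₂ => t₁.principals ∪ t₂.principals
  | _, _, _, .weak _ _ _ _ t => t.principals
  | _, _, _, .impL _ _ t₁ t₂ => t₁.principals ∪ t₂.principals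
  | _, _, _, .impR _ _ t => t.principals
  | _, _, _, .boxGL _ _ t => t.principals
  | _, _, _, .boxL φ t => insert (Formula.box φ) t.principals
  | _, _, _, .lift t => t.principals

/-- A proof tree bundled with its level and conclusion. -/
abbrev PGLSTree : Type :=
  (lv : SeqLevel) × (Γ : Finset Formula) × (Δ : Finset Formula) × GLSTree lv Γ Δ

/-- The set of subproofs of a proof tree (including the tree itself). -/
def GLSTree.subproofs {lv Γ Δ} (t : GLSTree lv Γ Δ) : Set PGLSTree :=
  insert ⟨lv, Γ, Δ, t⟩ <|
    match lv, Γ, Δ, t with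
    | _, _, _, .init _ _ => ∅
    | _, _, _, .initBot _ => ∅
    | _, _, _, .cut _ t₁ t₂ => t₁.subproofs ∪ t₂.subproofs
    | _, _, _, .weak _ _ _ _ t₁ => t₁.subproofs
    | _, _, _, .impL _ _ t₁ t₂ => t₁.subproofs ∪ t₂.subproofs
    | _, _, _, .impR _ _ t₁ => t₁.subproofs
    | _, _, _, .boxGL _ _ t₁ => t₁.subproofs
    | _, _, _, .boxL _ t₁ => t₁.subproofs
    | _, _, _, .lift t₁ => t₁.subproofs

/-- Kripke satisfaction over a frame `R` with atomic valuation `v`. -/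
def KSat {W : Type} (R : W → W → Prop) (v : W → ℕ → Prop) : Formula → W → Prop
  | .var p, w => v w p
  | .bot, _ => False
  | .imp φ ψ, w => KSat R v φ w → KSat R v ψ w
  | .box φ, w => ∀ w', R w w' → KSat R v φ w'

/-- A GL-model: a nonempty, transitive, converse well-founded Kripke model. -/
structure GLModel where
  World : Type
  ne : Nonempty World
  R : World → World → Prop
  trans : Transitive R
  cwf : ∀ f : ℕ → World, ¬ ∀ i, R (f i) (f (i + 1))
  val : World → ℕ → Prop

/-- Truth of a formula at a world of a GL-model. -/
def GLModel.sat (M : GLModel) (w : M.World) (φ : Formula) : Prop := KSat M.R M.val φ w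

/-- Truth of a sequent Γ ▸ Δ at a world: some γ ∈ Γ is false or some δ ∈ Δ is true. -/
def GLModel.seqTrue (M : GLModel) (w : M.World) (Γ Δ : Finset Formula) : Prop :=
  (∃ γ ∈ Γ, ¬ M.sat w γ) ∨ (∃ δ ∈ Δ, M.sat w δ)

/-- w is Σ-reflexive: □α → α is true at w for every □α ∈ Σ. -/
def GLModel.reflexiveFor (M : GLModel) (w : M.World) (S : Finset Formula) : Prop :=
  ∀ α : Formula, Formula.box α ∈ S → M.sat w ((Formula.box α).imp α)

/-- Saturation conditions (→L), (→R) for first-level sequents. -/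
def Saturated1 (Γ Δ : Finset Formula) : Prop :=
  (∀ φ ψ : Formula, φ.imp ψ ∈ Γ → φ ∈ Δ ∨ ψ ∈ Γ) ∧
  (∀ φ ψ : Formula, φ.imp ψ ∈ Δ → φ ∈ Γ ∧ ψ ∈ Δ)

/-- Saturation for second-level sequents: additionally (□L). -/
def Saturated2 (Γ Δ : Finset Formula) : Prop :=
  Saturated1 Γ Δ ∧ ∀ φ : Formula, Formula.box φ ∈ Γ → φ ∈ Γ

def Saturated : SeqLevel → Finset Formula → Finset Formula → Prop
  | .one => Saturated1
  | .two => Saturated2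

/-- The Hilbert system GL. -/
inductive GLHilbert : Formula → Prop
  | ax1 (φ ψ : Formula) : GLHilbert (φ.imp (ψ.imp φ))
  | ax2 (φ ψ χ : Formula) :
      GLHilbert ((φ.imp (ψ.imp χ)).imp ((φ.imp ψ).imp (φ.imp χ)))
  | ax3 (φ : Formula) : GLHilbert (((φ.imp .bot).imp .bot).imp φ)
  | axK (φ ψ : Formula) :
      GLHilbert ((Formula.box (φ.imp ψ)).imp ((Formula.box φ).imp (Formula.box ψ)))
  | axLob (φ : Formula) :
      GLHilbert ((Formula.box ((Formula.box φ).imp φ)).imp (Formula.box φ))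
  | mp {φ ψ} : GLHilbert (φ.imp ψ) → GLHilbert φ → GLHilbert ψ
  | nec {φ} : GLHilbert φ → GLHilbert (Formula.box φ)

/-- The Hilbert system GLS: theorems of GL and all □α → α, closed under modus ponens. -/
inductive GLSHilbert : Formula → Prop
  | gl {φ} : GLHilbert φ → GLSHilbert φ
  | refl (α : Formula) : GLSHilbert ((Formula.box α).imp α)
  | mp {φ ψ} : GLSHilbert (φ.imp ψ) → GLSHilbert φ → GLSHilbert ψ

/-- Conjunction (encoded with → and ⊥) of a list of formulas; empty conjunction is ⊤. -/
def Formula.conj : List Formula → Formula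
  | [] => Formula.bot.imp Formula.bot
  | φ :: l => ((φ.imp ((Formula.conj l).imp .bot)).imp .bot)

/-- Membership predicate for the canonical model: saturated first-level sequents over S
that are not cut-free provable in GLS_seq. -/
def W0pred (S : Finset Formula) (s : Finset Formula × Finset Formula) : Prop :=
  Saturated1 s.1 s.2 ∧ ¬ GLSSeq false SeqLevel.one s.1 s.2 ∧ s.1 ∪ s.2 ⊆ S

/-- Worlds of the canonical model. -/
def W0 (S : Finset Formula) : Type := {s : Finset Formula × Finset Formula // W0pred S s}

/-- Accessibility of the canonical model: (Γ⇒Δ) R₀ (Γ'⇒Δ') iff Γ_□ ⊊ Γ'_□ and Γ_□ ⊆ Γ'. -/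
def R0 (S : Finset Formula) (s t : W0 S) : Prop :=
  boxInv s.1.1 ⊂ boxInv t.1.1 ∧ boxInv s.1.1 ⊆ t.1.1

/-- Valuation of the canonical model: p is true at (Γ⇒Δ) iff p ∈ Γ. -/
def V0 (S : Finset Formula) (s : W0 S) (p : ℕ) : Prop := Formula.var p ∈ s.1.1

/-- The extended set of worlds W = W₀ ∪ ℕ. -/
def Wext (S : Finset Formula) : Type := W0 S ⊕ ℕ

/-- The extended accessibility relation, with distinguished world `wp` in W₀. -/
def Rext (S : Finset Formula) (wp : W0 S) : Wext S → Wext S → Prop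
  | Sum.inl x, Sum.inl y => R0 S x y
  | Sum.inr _, Sum.inl y => y = wp ∨ R0 S wp y
  | Sum.inr n, Sum.inr m => m < n
  | Sum.inl _, Sum.inr _ => False

/-- The extended valuation: worlds in ℕ behave like the distinguished world `wp`. -/
def Vext (S : Finset Formula) (wp : W0 S) : Wext S → ℕ → Prop
  | Sum.inl x, p => V0 S x p
  | Sum.inr _, p => V0 S wp p

open Classical

/-! ### Basic lemmas about subformulas -/

lemma Formula.mem_subf_self (φ : Formula) : φ ∈ φ.subf := by
  cases φ <;> simp [Formula.subf]

lemma Formula.subf_trans : ∀ {ψ χ : Formula}, χ ∈ ψ.subf → χ.subf ⊆ ψ.subf := by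
  intro ψ
  induction ψ with
  | var p => intro χ h; simp [Formula.subf] at h; subst h; simp [Formula.subf]
  | bot => intro χ h; simp [Formula.subf] at h; subst h; simp [Formula.subf]
  | imp φ₁ φ₂ ih₁ ih₂ =>
      intro χ h
      simp only [Formula.subf, Finset.mem_insert, Finset.mem_union] at h
      rcases h with h | h | h
      · subst h; exact subset_rfl
      · exact (ih₁ h).trans (by intro x hx; simp [Formula.subf]; right; left; exact hx)
      · exact (ih₂ h).trans (by intro x hx; simp [Formula.subf]; right; right; exact hx)
  | box φ₁ ih =>
      intro χ h
      simp only [Formula.subf, Finset.mem_insert] at h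
      rcases h with h | h
      · subst h; exact subset_rfl
      · exact (ih h).trans (by intro x hx; simp [Formula.subf, hx])

lemma mem_SF_left {Ψ Φ : Finset Formula} {φ : Formula} (h : φ ∈ Ψ) : φ ∈ SF Ψ Φ := by
  simp only [SF, Finset.mem_biUnion]
  exact ⟨φ, Finset.mem_union_left _ h, φ.mem_subf_self⟩

lemma mem_SF_right {Ψ Φ : Finset Formula} {φ : Formula} (h : φ ∈ Φ) : φ ∈ SF Ψ Φ := by
  simp only [SF, Finset.mem_biUnion]
  exact ⟨φ, Finset.mem_union_right _ h, φ.mem_subf_self⟩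

lemma SF_closed {Ψ Φ : Finset Formula} {φ : Formula} (h : φ ∈ SF Ψ Φ) : φ.subf ⊆ SF Ψ Φ := by
  simp only [SF, Finset.mem_biUnion] at h ⊢
  obtain ⟨ψ, hψ, hφ⟩ := h
  intro χ hχ
  exact Finset.mem_biUnion.2 ⟨ψ, hψ, Formula.subf_trans hφ hχ⟩

lemma mem_boxInv {Θ : Finset Formula} {φ : Formula} : φ ∈ boxInv Θ ↔ Formula.box φ ∈ Θ := by
  constructor
  · rintro h
    simp only [boxInv, Finset.mem_image, Finset.mem_filter] at h
    obtain ⟨ψ, ⟨hψ, hb⟩, he⟩ := h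
    cases ψ <;> simp [Formula.isBox] at hb <;> simp [Formula.unbox] at he
    · subst he; exact hψ
  · intro h
    simp only [boxInv, Finset.mem_image, Finset.mem_filter]
    exact ⟨Formula.box φ, ⟨h, rfl⟩, rfl⟩

/-! ### Provability helpers -/

lemma GLSSeq.ofMem {c lv} {Γ Δ : Finset Formula} {φ : Formula} (h1 : φ ∈ Γ) (h2 : φ ∈ Δ) :
    GLSSeq c lv Γ Δ :=
  GLSSeq.weak (Finset.singleton_subset_iff.2 h1) (Finset.singleton_subset_iff.2 h2)
    (GLSSeq.init c lv φ)

lemma GLSSeq.ofBot {c lv} {Γ Δ : Finset Formula} (h1 : Formula.bot ∈ Γ) :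
    GLSSeq c lv Γ Δ :=
  GLSSeq.weak (Finset.singleton_subset_iff.2 h1) (Finset.empty_subset _) (GLSSeq.initBot c lv)

lemma GLSSeq.toTrue {c lv} {Γ Δ : Finset Formula} (h : GLSSeq c lv Γ Δ) :
    GLSSeq true lv Γ Δ := by
  induction h with
  | init c lv φ => exact .init _ _ _
  | initBot c lv => exact .initBot _ _
  | cut φ h1 h2 ih1 ih2 => exact .cut φ ih1 ih2
  | weak h1 h2 h ih => exact .weak h1 h2 ih
  | impL h1 h2 ih1 ih2 => exact .impL ih1 ih2
  | impR h ih => exact .impR ih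
  | boxGL h ih => exact .boxGL ih
  | boxL φ h ih => exact .boxL φ ih
  | lift h ih => exact .lift ih

/-! ### Semantics helpers -/

lemma GLModel.seqTrue_mono (M : GLModel) {w : M.World} {Γ Δ Γ' Δ' : Finset Formula}
    (h1 : Γ ⊆ Γ') (h2 : Δ ⊆ Δ') (h : M.seqTrue w Γ Δ) : M.seqTrue w Γ' Δ' := by
  rcases h with ⟨γ, hγ, hs⟩ | ⟨δ, hδ, hs⟩
  · exact Or.inl ⟨γ, h1 hγ, hs⟩
  · exact Or.inr ⟨δ, h2 hδ, hs⟩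

/-- From converse well-foundedness: any set of worlds with an element contains an
R-maximal element. -/
lemma GLModel.exists_max (M : GLModel) (A : Set M.World) {w : M.World} (hw : w ∈ A) :
    ∃ u ∈ A, ∀ v, M.R u v → v ∉ A := by
  by_contra h
  push_neg at h
  have h' : ∀ u : M.World, u ∈ A → ∃ v, v ∈ A ∧ M.R u v := by
    intro u hu
    obtain ⟨v, hv, hva⟩ := h u hu
    exact ⟨v, hva, hv⟩
  let g : {u // u ∈ A} → {u // u ∈ A} := fun u =>
    ⟨(h' u.1 u.2).choose, (h' u.1 u.2).choose_spec.1⟩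
  let f : ℕ → {u // u ∈ A} := fun n => g^[n] ⟨w, hw⟩
  refine M.cwf (fun n => (f n).1) ?_
  intro i
  show M.R (f i).1 (f (i+1)).1
  have : f (i + 1) = g (f i) := Function.iterate_succ_apply' g i ⟨w, hw⟩
  rw [this]
  exact (h' (f i).1 (f i).2).choose_spec.2

/-- Soundness statement, depending on the level. -/
def SoundAt : SeqLevel → Finset Formula → Finset Formula → Prop
  | .one, Γ, Δ => ∀ (M : GLModel) (w : M.World), M.seqTrue w Γ Δ
  | .two, Γ, Δ => ∃ S : Finset Formula, ∀ (M : GLModel) (w : M.World),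
      M.reflexiveFor w S → M.seqTrue w Γ Δ

lemma sem_init (M : GLModel) (w : M.World) (φ : Formula) : M.seqTrue w {φ} {φ} := by
  by_cases h : M.sat w φ
  · exact Or.inr ⟨φ, Finset.mem_singleton_self φ, h⟩
  · exact Or.inl ⟨φ, Finset.mem_singleton_self φ, h⟩

lemma sem_bot (M : GLModel) (w : M.World) : M.seqTrue w {Formula.bot} ∅ :=
  Or.inl ⟨Formula.bot, Finset.mem_singleton_self _, fun h => h⟩

lemma sem_cut {M : GLModel} {w : M.World} {Γ Δ : Finset Formula} {φ : Formula}
    (h1 : M.seqTrue w Γ (insert φ Δ)) (h2 : M.seqTrue w (insert φ Γ) Δ) :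
    M.seqTrue w Γ Δ := by
  rcases h1 with ⟨γ, hγ, hs⟩ | ⟨δ, hδ, hs⟩
  · exact Or.inl ⟨γ, hγ, hs⟩
  · rcases Finset.mem_insert.1 hδ with rfl | hδ
    · rcases h2 with ⟨γ, hγ, hs'⟩ | ⟨δ', hδ', hs'⟩
      · rcases Finset.mem_insert.1 hγ with rfl | hγ
        · exact absurd hs hs'
        · exact Or.inl ⟨γ, hγ, hs'⟩
      · exact Or.inr ⟨δ', hδ', hs'⟩
    · exact Or.inr ⟨δ, hδ, hs⟩

lemma sem_impL {M : GLModel} {w : M.World} {Γ Δ : Finset Formula} {φ ψ : Formula}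
    (h1 : M.seqTrue w Γ (insert φ Δ)) (h2 : M.seqTrue w (insert ψ Γ) Δ) :
    M.seqTrue w (insert (Formula.imp φ ψ) Γ) Δ := by
  rcases h1 with ⟨γ, hγ, hs⟩ | ⟨δ, hδ, hs⟩
  · exact Or.inl ⟨γ, Finset.mem_insert_of_mem hγ, hs⟩
  · rcases Finset.mem_insert.1 hδ with rfl | hδ
    · rcases h2 with ⟨γ, hγ, hs'⟩ | ⟨δ', hδ', hs'⟩
      · rcases Finset.mem_insert.1 hγ with rfl | hγ
        · exact Or.inl ⟨Formula.imp δ γ, Finset.mem_insert_self _ _, fun himp => hs' (himp hs)⟩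
        · exact Or.inl ⟨γ, Finset.mem_insert_of_mem hγ, hs'⟩
      · exact Or.inr ⟨δ', hδ', hs'⟩
    · exact Or.inr ⟨δ, hδ, hs⟩

lemma sem_impR {M : GLModel} {w : M.World} {Γ Δ : Finset Formula} {φ ψ : Formula}
    (h : M.seqTrue w (insert φ Γ) (insert ψ Δ)) :
    M.seqTrue w Γ (insert (Formula.imp φ ψ) Δ) := by
  rcases h with ⟨γ, hγ, hs⟩ | ⟨δ, hδ, hs⟩
  · rcases Finset.mem_insert.1 hγ with rfl | hγ
    · exact Or.inr ⟨Formula.imp γ ψ, Finset.mem_insert_self _ _, fun hh => absurd hh hs⟩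
    · exact Or.inl ⟨γ, hγ, hs⟩
  · rcases Finset.mem_insert.1 hδ with rfl | hδ
    · exact Or.inr ⟨Formula.imp φ δ, Finset.mem_insert_self _ _, fun _ => hs⟩
    · exact Or.inr ⟨δ, Finset.mem_insert_of_mem hδ, hs⟩

lemma sem_boxGL {Γ : Finset Formula} {φ : Formula}
    (h : ∀ (M : GLModel) (w : M.World),
      M.seqTrue w (Γ ∪ Γ.image Formula.box ∪ {Formula.box φ}) {φ})
    (M : GLModel) (w : M.World) : M.seqTrue w (Γ.image Formula.box) {Formula.box φ} := by
  by_cases hΓ : ∀ γ ∈ Γ, M.sat w (Formula.box γ)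
  · by_cases hφ : M.sat w (Formula.box φ)
    · exact Or.inr ⟨Formula.box φ, Finset.mem_singleton_self _, hφ⟩
    · -- find a maximal counterexample
      simp only [GLModel.sat, KSat] at hφ
      push_neg at hφ
      obtain ⟨w₀, hw₀R, hw₀⟩ := hφ
      obtain ⟨u, ⟨huR, huφ⟩, humax⟩ :=
        M.exists_max {v | M.R w v ∧ ¬ M.sat v φ} ⟨hw₀R, hw₀⟩
      have := h M u
      rcases this with ⟨γ, hγ, hs⟩ | ⟨δ, hδ, hs⟩
      · simp only [Finset.mem_union, Finset.mem_image, Finset.mem_singleton] at hγ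
        rcases hγ with (hγ | ⟨γ', hγ', rfl⟩) | rfl
        · -- γ ∈ Γ, true at u since □γ true at w and R w u
          exact (hs ((hΓ γ hγ) u huR)).elim
        · -- □γ' at u: successors of u are successors of w
          refine (hs (fun v hv => ?_)).elim
          exact (hΓ γ' hγ') v (M.trans huR hv)
        · -- □φ at u: by maximality
          refine (hs (fun v hv => ?_)).elim
          by_contra hvφ
          exact humax v hv ⟨M.trans huR hv, hvφ⟩
      · rw [Finset.mem_singleton] at hδ; subst hδ
        exact (huφ hs).elim
  · push_neg at hΓ
    obtain ⟨γ, hγ, hs⟩ := hΓ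
    exact Or.inl ⟨Formula.box γ, Finset.mem_image_of_mem _ hγ, hs⟩

lemma GLModel.reflexiveFor_mono (M : GLModel) {w : M.World} {S S' : Finset Formula}
    (h : S ⊆ S') (hr : M.reflexiveFor w S') : M.reflexiveFor w S :=
  fun α hα => hr α (h hα)

lemma soundness {c lv} {Γ Δ : Finset Formula} (h : GLSSeq c lv Γ Δ) : SoundAt lv Γ Δ := by
  induction h with
  | init c lv φ =>
      cases lv
      · exact fun M w => sem_init M w φ
      · exact ⟨∅, fun M w _ => sem_init M w φ⟩
  | initBot c lv =>
      cases lv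
      · exact fun M w => sem_bot M w
      · exact ⟨∅, fun M w _ => sem_bot M w⟩
  | @cut lv Γ Δ φ h1 h2 ih1 ih2 =>
      cases lv
      · exact fun M w => sem_cut (ih1 M w) (ih2 M w)
      · obtain ⟨S1, hS1⟩ := ih1; obtain ⟨S2, hS2⟩ := ih2
        refine ⟨S1 ∪ S2, fun M w hr => ?_⟩
        exact sem_cut (hS1 M w (M.reflexiveFor_mono Finset.subset_union_left hr))
          (hS2 M w (M.reflexiveFor_mono Finset.subset_union_right hr))
  | @weak c lv Γ Δ Γ' Δ' h1 h2 h ih =>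
      cases lv
      · exact fun M w => M.seqTrue_mono h1 h2 (ih M w)
      · obtain ⟨S, hS⟩ := ih
        exact ⟨S, fun M w hr => M.seqTrue_mono h1 h2 (hS M w hr)⟩
  | @impL c lv Γ Δ φ ψ h1 h2 ih1 ih2 =>
      cases lv
      · exact fun M w => sem_impL (ih1 M w) (ih2 M w)
      · obtain ⟨S1, hS1⟩ := ih1; obtain ⟨S2, hS2⟩ := ih2
        refine ⟨S1 ∪ S2, fun M w hr => ?_⟩
        exact sem_impL (hS1 M w (M.reflexiveFor_mono Finset.subset_union_left hr))
          (hS2 M w (M.reflexiveFor_mono Finset.subset_union_right hr))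
  | @impR c lv Γ Δ φ ψ h ih =>
      cases lv
      · exact fun M w => sem_impR (ih M w)
      · obtain ⟨S, hS⟩ := ih
        exact ⟨S, fun M w hr => sem_impR (hS M w hr)⟩
  | @boxGL c Γ φ h ih =>
      exact sem_boxGL ih
  | @boxL c Γ Δ φ h ih =>
      obtain ⟨S, hS⟩ := ih
      refine ⟨insert (Formula.box φ) S, fun M w hr => ?_⟩
      by_cases hb : M.sat w (Formula.box φ)
      · have hφ : M.sat w φ := hr φ (Finset.mem_insert_self _ _) hb
        have := hS M w (M.reflexiveFor_mono (Finset.subset_insert _ _) hr)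
        rcases this with ⟨γ, hγ, hs⟩ | ⟨δ, hδ, hs⟩
        · rcases Finset.mem_insert.1 hγ with rfl | hγ
          · exact absurd hφ hs
          · exact Or.inl ⟨γ, Finset.mem_insert_of_mem hγ, hs⟩
        · exact Or.inr ⟨δ, hδ, hs⟩
      · exact Or.inl ⟨Formula.box φ, Finset.mem_insert_self _ _, hb⟩
  | @lift c Γ Δ h ih =>
      exact ⟨∅, fun M w _ => ih M w⟩

/-! ### Saturation -/

lemma card_sdiff_insert_lt {S Δ : Finset Formula} {φ : Formula} (hφS : φ ∈ S) (hφ : φ ∉ Δ) :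
    (S \ insert φ Δ).card < (S \ Δ).card := by
  apply Finset.card_lt_card
  constructor
  · exact Finset.sdiff_subset_sdiff subset_rfl (Finset.subset_insert _ _)
  · intro hsub
    have : φ ∈ S \ Δ := Finset.mem_sdiff.2 ⟨hφS, hφ⟩
    have := hsub this
    simp at this

lemma card_sdiff_insert_le (S Δ : Finset Formula) (φ : Formula) :
    (S \ insert φ Δ).card ≤ (S \ Δ).card :=
  Finset.card_le_card (Finset.sdiff_subset_sdiff subset_rfl (Finset.subset_insert _ _))

lemma saturate (lv : SeqLevel) (S : Finset Formula) (hSc : ∀ ψ ∈ S, Formula.subf ψ ⊆ S) :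
    ∀ (n : ℕ) (Γ Δ : Finset Formula), (S \ Γ).card + (S \ Δ).card = n → Γ ∪ Δ ⊆ S →
    ¬ GLSSeq false lv Γ Δ →
    ∃ Γ' Δ', Γ ⊆ Γ' ∧ Δ ⊆ Δ' ∧ Γ' ∪ Δ' ⊆ S ∧ Saturated lv Γ' Δ' ∧
      ¬ GLSSeq false lv Γ' Δ' := by
  intro n
  induction n using Nat.strong_induction_on with
  | _ n ih =>
    intro Γ Δ hn hsub hnp
    have hΓS : Γ ⊆ S := (Finset.union_subset_iff.1 hsub).1
    have hΔS : Δ ⊆ S := (Finset.union_subset_iff.1 hsub).2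
    by_cases hA : ∀ φ ψ : Formula, Formula.imp φ ψ ∈ Γ → φ ∈ Δ ∨ ψ ∈ Γ
    · by_cases hB : ∀ φ ψ : Formula, Formula.imp φ ψ ∈ Δ → φ ∈ Γ ∧ ψ ∈ Δ
      · cases lv with
        | one => exact ⟨Γ, Δ, subset_rfl, subset_rfl, hsub, ⟨hA, hB⟩, hnp⟩
        | two =>
          by_cases hC : ∀ φ : Formula, Formula.box φ ∈ Γ → φ ∈ Γ
          · exact ⟨Γ, Δ, subset_rfl, subset_rfl, hsub, ⟨⟨hA, hB⟩, hC⟩, hnp⟩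
          · push_neg at hC
            obtain ⟨φ, hbφ, hφ⟩ := hC
            have hφS : φ ∈ S := hSc _ (hΓS hbφ)
              (by simp [Formula.subf, Formula.mem_subf_self])
            have hnp' : ¬ GLSSeq false SeqLevel.two (insert φ Γ) Δ := by
              intro hp
              exact hnp (by
                have := GLSSeq.boxL φ hp
                rwa [Finset.insert_eq_self.2 hbφ] at this)
            have hm : (S \ insert φ Γ).card + (S \ Δ).card < n := by
              rw [← hn]
              exact Nat.add_lt_add_right (card_sdiff_insert_lt hφS hφ) _
            obtain ⟨Γ', Δ', h1, h2, h3, h4, h5⟩ := ih _ hm (insert φ Γ) Δ rfl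
              (Finset.union_subset (Finset.insert_subset hφS hΓS) hΔS) hnp'
            exact ⟨Γ', Δ', (Finset.subset_insert _ _).trans h1, h2, h3, h4, h5⟩
      · push_neg at hB
        obtain ⟨φ, ψ, himp, hor⟩ := hB
        have hφS : φ ∈ S := hSc _ (hΔS himp)
          (by simp [Formula.subf, Formula.mem_subf_self])
        have hψS : ψ ∈ S := hSc _ (hΔS himp)
          (by simp [Formula.subf, Formula.mem_subf_self])
        have hnp' : ¬ GLSSeq false lv (insert φ Γ) (insert ψ Δ) := by
          intro hp
          exact hnp (by
            have := GLSSeq.impR hp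
            rwa [Finset.insert_eq_self.2 himp] at this)
        have hm : (S \ insert φ Γ).card + (S \ insert ψ Δ).card < n := by
          rw [← hn]
          by_cases hφΓ : φ ∈ Γ
          · have hψΔ : ψ ∉ Δ := hor hφΓ
            exact Nat.add_lt_add_of_le_of_lt (card_sdiff_insert_le _ _ _)
              (card_sdiff_insert_lt hψS hψΔ)
          · exact Nat.add_lt_add_of_lt_of_le (card_sdiff_insert_lt hφS hφΓ)
              (card_sdiff_insert_le _ _ _)
        obtain ⟨Γ', Δ', h1, h2, h3, h4, h5⟩ := ih _ hm (insert φ Γ) (insert ψ Δ) rfl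
          (Finset.union_subset (Finset.insert_subset hφS hΓS)
            (Finset.insert_subset hψS hΔS)) hnp'
        exact ⟨Γ', Δ', (Finset.subset_insert _ _).trans h1,
          (Finset.subset_insert _ _).trans h2, h3, h4, h5⟩
    · push_neg at hA
      obtain ⟨φ, ψ, himp, hφ, hψ⟩ := hA
      have hφS : φ ∈ S := hSc _ (hΓS himp)
        (by simp [Formula.subf, Formula.mem_subf_self])
      have hψS : ψ ∈ S := hSc _ (hΓS himp)
        (by simp [Formula.subf, Formula.mem_subf_self])
      by_cases h1 : GLSSeq false lv Γ (insert φ Δ)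
      · have hnp' : ¬ GLSSeq false lv (insert ψ Γ) Δ := by
          intro hp
          exact hnp (by
            have := GLSSeq.impL h1 hp
            rwa [Finset.insert_eq_self.2 himp] at this)
        have hm : (S \ insert ψ Γ).card + (S \ Δ).card < n := by
          rw [← hn]
          exact Nat.add_lt_add_right (card_sdiff_insert_lt hψS hψ) _
        obtain ⟨Γ', Δ', hh1, hh2, hh3, hh4, hh5⟩ := ih _ hm (insert ψ Γ) Δ rfl
          (Finset.union_subset (Finset.insert_subset hψS hΓS) hΔS) hnp'
        exact ⟨Γ', Δ', (Finset.subset_insert _ _).trans hh1, hh2, hh3, hh4, hh5⟩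
      · have hm : (S \ Γ).card + (S \ insert φ Δ).card < n := by
          rw [← hn]
          exact Nat.add_lt_add_left (card_sdiff_insert_lt hφS hφ) _
        obtain ⟨Γ', Δ', hh1, hh2, hh3, hh4, hh5⟩ := ih _ hm Γ (insert φ Δ) rfl
          (Finset.union_subset hΓS (Finset.insert_subset hφS hΔS)) h1
        exact ⟨Γ', Δ', hh1, (Finset.subset_insert _ _).trans hh2, hh3, hh4, hh5⟩

/-! ### The canonical model -/

lemma W0.not_both {S : Finset Formula} (s : W0 S) {φ : Formula}
    (h1 : φ ∈ s.1.1) (h2 : φ ∈ s.1.2) : False :=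
  s.2.2.1 (GLSSeq.ofMem h1 h2)

lemma W0.not_bot {S : Finset Formula} (s : W0 S) (h : Formula.bot ∈ s.1.1) : False :=
  s.2.2.1 (GLSSeq.ofBot h)

lemma boxInv_subset_S {S Γ : Finset Formula} (hSc : ∀ ψ ∈ S, Formula.subf ψ ⊆ S)
    (hΓ : Γ ⊆ S) : boxInv Γ ⊆ S := by
  intro α hα
  have hbox : Formula.box α ∈ Γ := mem_boxInv.1 hα
  exact hSc _ (hΓ hbox) (by simp [Formula.subf, Formula.mem_subf_self])

/-- Key extension lemma: a successor world falsifying φ when □φ belongs to the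
right-hand side. -/
lemma exists_succ {S : Finset Formula} (hSc : ∀ ψ ∈ S, Formula.subf ψ ⊆ S)
    (s : W0 S) {φ : Formula} (hφ : Formula.box φ ∈ s.1.2) :
    ∃ t : W0 S, R0 S s t ∧ φ ∈ t.1.2 := by
  obtain ⟨⟨Γ, Δ⟩, ⟨hsat, hnp, hsub⟩⟩ := s
  have hΓS : Γ ⊆ S := (Finset.union_subset_iff.1 hsub).1
  have hΔS : Δ ⊆ S := (Finset.union_subset_iff.1 hsub).2
  set Γ₀ : Finset Formula :=
    boxInv Γ ∪ (boxInv Γ).image Formula.box ∪ {Formula.box φ} with hΓ₀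
  have himg : (boxInv Γ).image Formula.box ⊆ Γ := by
    intro χ hχ
    obtain ⟨α, hα, rfl⟩ := Finset.mem_image.1 hχ
    exact mem_boxInv.1 hα
  have hnp₀ : ¬ GLSSeq false SeqLevel.one Γ₀ {φ} := by
    intro hp
    have := GLSSeq.boxGL hp
    exact hnp (GLSSeq.weak himg (Finset.singleton_subset_iff.2 hφ) this)
  have hsub₀ : Γ₀ ∪ {φ} ⊆ S := by
    apply Finset.union_subset
    · apply Finset.union_subset
      · exact Finset.union_subset (boxInv_subset_S hSc hΓS) (himg.trans hΓS)
      · exact Finset.singleton_subset_iff.2 (hΔS hφ)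
    · exact Finset.singleton_subset_iff.2
        (hSc _ (hΔS hφ) (by simp [Formula.subf, Formula.mem_subf_self]))
  obtain ⟨Γ', Δ', h1, h2, h3, h4, h5⟩ := saturate SeqLevel.one S hSc _ Γ₀ {φ} rfl hsub₀ hnp₀
  refine ⟨⟨(Γ', Δ'), h4, h5, h3⟩, ⟨?_, ?_⟩, h2 (Finset.mem_singleton_self φ)⟩
  · constructor
    · intro α hα
      apply mem_boxInv.2
      apply h1
      exact Finset.mem_union_left _ (Finset.mem_union_right _
        (Finset.mem_image_of_mem _ hα))
    · intro hsub'
      have hφ' : φ ∈ boxInv Γ' := mem_boxInv.2 (h1 (Finset.mem_union_right _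
        (Finset.mem_singleton_self _)))
      have : Formula.box φ ∈ Γ := mem_boxInv.1 (hsub' hφ')
      exact hnp (GLSSeq.ofMem this hφ)
  · intro α hα
    exact h1 (Finset.mem_union_left _ (Finset.mem_union_left _ hα))

/-- Truth lemma for the canonical model. -/
lemma truth_lemma {S : Finset Formula} (hSc : ∀ ψ ∈ S, Formula.subf ψ ⊆ S) :
    ∀ (φ : Formula) (s : W0 S),
      (φ ∈ s.1.1 → KSat (R0 S) (V0 S) φ s) ∧ (φ ∈ s.1.2 → ¬ KSat (R0 S) (V0 S) φ s) := by
  intro φ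
  induction φ with
  | var p =>
      intro s
      refine ⟨fun h => h, fun h hk => s.not_both hk h⟩
  | bot =>
      intro s
      exact ⟨fun h => (s.not_bot h).elim, fun _ hk => hk⟩
  | imp φ ψ ihφ ihψ =>
      intro s
      constructor
      · intro h
        rcases s.2.1.1 φ ψ h with hφ | hψ
        · exact fun hk => ((ihφ s).2 hφ hk).elim
        · exact fun _ => (ihψ s).1 hψ
      · intro h hk
        obtain ⟨hφ, hψ⟩ := s.2.1.2 φ ψ h
        exact (ihψ s).2 hψ (hk ((ihφ s).1 hφ))
  | box φ ihφ =>
      intro s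
      constructor
      · intro h t hRt
        exact (ihφ t).1 (hRt.2 (mem_boxInv.2 h))
      · intro h hk
        obtain ⟨t, hRt, hφt⟩ := exists_succ hSc s h
        exact (ihφ t).2 hφt (hk t hRt)

lemma R0_trans (S : Finset Formula) : Transitive (R0 S) := by
  intro a b c hab hbc
  exact ⟨hab.1.trans hbc.1, hab.1.subset.trans hbc.2⟩

lemma R0_cwf (S : Finset Formula) (f : ℕ → W0 S) : ¬ ∀ i, R0 S (f i) (f (i + 1)) := by
  intro h
  have hmono : ∀ i, (boxInv (f 0).1.1).card + i ≤ (boxInv (f i).1.1).card := by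
    intro i
    induction i with
    | zero => simp
    | succ i ih =>
        have := Finset.card_lt_card (h i).1
        omega
  have hbound : ∀ i, (boxInv (f i).1.1).card ≤ (boxInv S).card := by
    intro i
    apply Finset.card_le_card
    intro α hα
    exact mem_boxInv.2 ((f i).2.2.2 (Finset.mem_union_left _ (mem_boxInv.1 hα)))
  have h1 := hmono ((boxInv S).card + 1)
  have h2 := hbound ((boxInv S).card + 1)
  omega

/-! ### The extended model -/

lemma Rext_trans (S : Finset Formula) (wp : W0 S) : Transitive (Rext S wp) := by
  intro a b c hab hbc
  cases a with
  | inl x =>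
      cases b with
      | inl y =>
          cases c with
          | inl z => exact R0_trans S hab hbc
          | inr n => exact hbc.elim
      | inr n => exact hab.elim
  | inr n =>
      cases b with
      | inl y =>
          cases c with
          | inl z =>
              rcases hab with rfl | hab
              · exact Or.inr hbc
              · exact Or.inr (R0_trans S hab hbc)
          | inr m => exact hbc.elim
      | inr m =>
          cases c with
          | inl z => exact hbc
          | inr k => exact lt_trans hbc hab

lemma Rext_cwf (S : Finset Formula) (wp : W0 S) (g : ℕ → Wext S)
    (h : ∀ i, Rext S wp (g i) (g (i + 1))) : False := by
  by_cases hl : ∃ i x, g i = Sum.inl x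
  · obtain ⟨i, x, hx⟩ := hl
    have hall : ∀ k, ∃ y : W0 S, g (i + k) = Sum.inl y := by
      intro k
      induction k with
      | zero => exact ⟨x, hx⟩
      | succ k ih =>
          obtain ⟨y, hy⟩ := ih
          have hik := h (i + k)
          rw [hy] at hik
          cases hgk : g (i + k + 1) with
          | inl z => exact ⟨z, rfl⟩
          | inr n => rw [hgk] at hik; exact hik.elim
    choose y hy using hall
    refine R0_cwf S y ?_
    intro k
    have hik := h (i + k)
    rw [hy k, show i + k + 1 = i + (k + 1) by omega, hy (k + 1)] at hik
    exact hik
  · have hall : ∀ i, ∃ n : ℕ, g i = Sum.inr n := by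
      intro i
      cases hg : g i with
      | inl x => exact absurd ⟨i, x, hg⟩ hl
      | inr n => exact ⟨n, rfl⟩
    choose n hn using hall
    have dec : ∀ i, n (i + 1) < n i := by
      intro i
      have hi := h i
      rw [hn i, hn (i + 1)] at hi
      exact hi
    have hb : ∀ i, n i + i ≤ n 0 := by
      intro i
      induction i with
      | zero => omega
      | succ i ih => have := dec i; omega
    have := hb (n 0 + 1)
    omega

/-- The extended model as a GLModel. -/
def Mext (S : Finset Formula) (wp : W0 S) : GLModel where
  World := Wext S
  ne := ⟨Sum.inr 0⟩
  R := Rext S wp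
  trans := Rext_trans S wp
  cwf := fun g hg => Rext_cwf S wp g hg
  val := Vext S wp

/-- Satisfaction at `inl` worlds of the extended model agrees with the canonical model. -/
lemma sat_inl (S : Finset Formula) (wp : W0 S) :
    ∀ (φ : Formula) (x : W0 S),
      KSat (Rext S wp) (Vext S wp) φ (Sum.inl x) ↔ KSat (R0 S) (V0 S) φ x := by
  intro φ
  induction φ with
  | var p => intro x; rfl
  | bot => intro x; rfl
  | imp φ ψ ihφ ihψ =>
      intro x
      simp only [KSat]
      rw [ihφ x, ihψ x]
  | box φ ihφ =>
      intro x
      simp only [KSat]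
      constructor
      · intro h y hR
        exact (ihφ y).1 (h (Sum.inl y) hR)
      · intro h w' hR
        cases w' with
        | inl y => exact (ihφ y).2 (h y hR)
        | inr m => exact hR.elim

/-- Truth lemma at the `inr` worlds of the extended model. -/
lemma truth_inr {S : Finset Formula} (hSc : ∀ ψ ∈ S, Formula.subf ψ ⊆ S) (wp : W0 S)
    (hwp2 : ∀ φ : Formula, Formula.box φ ∈ wp.1.1 → φ ∈ wp.1.1) :
    ∀ (φ : Formula) (n : ℕ),
      (φ ∈ wp.1.1 → KSat (Rext S wp) (Vext S wp) φ (Sum.inr n)) ∧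
      (φ ∈ wp.1.2 → ¬ KSat (Rext S wp) (Vext S wp) φ (Sum.inr n)) := by
  intro φ
  induction φ with
  | var p =>
      intro n
      exact ⟨fun h => h, fun h hk => wp.not_both hk h⟩
  | bot =>
      intro n
      exact ⟨fun h => (wp.not_bot h).elim, fun _ hk => hk⟩
  | imp φ ψ ihφ ihψ =>
      intro n
      constructor
      · intro h
        rcases wp.2.1.1 φ ψ h with hφ | hψ
        · exact fun hk => ((ihφ n).2 hφ hk).elim
        · exact fun _ => (ihψ n).1 hψ
      · intro h hk
        obtain ⟨hφ, hψ⟩ := wp.2.1.2 φ ψ h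
        exact (ihψ n).2 hψ (hk ((ihφ n).1 hφ))
  | box φ ihφ =>
      intro n
      constructor
      · intro h w' hR
        cases w' with
        | inl y =>
            rcases hR with heq | hR
            · rw [heq]
              exact (sat_inl S wp φ wp).2 ((truth_lemma hSc φ wp).1 (hwp2 φ h))
            · exact (sat_inl S wp φ y).2 ((truth_lemma hSc φ y).1 (hR.2 (mem_boxInv.2 h)))
        | inr m => exact (ihφ m).1 (hwp2 φ h)
      · intro h hk
        obtain ⟨t, hRt, hφt⟩ := exists_succ hSc wp h
        have := hk (Sum.inl t) (Or.inr hRt)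
        exact (truth_lemma hSc φ t).2 hφt ((sat_inl S wp φ t).1 this)

/-! ### Completeness -/

lemma completeness (Ψ Φ : Finset Formula)
    (h4 : ∀ (M : GLModel) (f : ℕ → M.World), (∀ i, M.R (f (i + 1)) (f i)) →
      ∃ i, M.seqTrue (f i) Ψ Φ) :
    GLSSeq false SeqLevel.two Ψ Φ := by
  by_contra hnp
  set S := SF Ψ Φ with hS
  have hSc : ∀ ψ ∈ S, Formula.subf ψ ⊆ S := fun ψ hψ => SF_closed hψ
  have hsub : Ψ ∪ Φ ⊆ S :=
    Finset.union_subset (fun φ hφ => mem_SF_left hφ) (fun φ hφ => mem_SF_right hφ)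
  obtain ⟨Γ', Δ', hΨ, hΦ, hsub', hsat, hnp'⟩ :=
    saturate SeqLevel.two S hSc _ Ψ Φ rfl hsub hnp
  have hsat2 : Saturated2 Γ' Δ' := hsat
  have hnp1 : ¬ GLSSeq false SeqLevel.one Γ' Δ' := fun hp => hnp' (GLSSeq.lift hp)
  let wp : W0 S := ⟨(Γ', Δ'), hsat2.1, hnp1, hsub'⟩
  let M := Mext S wp
  let f : ℕ → M.World := fun i => Sum.inr i
  have hf : ∀ i, M.R (f (i + 1)) (f i) := fun i => Nat.lt_succ_self i
  obtain ⟨i, hi⟩ := h4 M f hf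
  rcases hi with ⟨γ, hγ, hns⟩ | ⟨δ, hδ, hs⟩
  · exact hns ((truth_inr hSc wp hsat2.2 γ i).1 (hΨ hγ))
  · exact (truth_inr hSc wp hsat2.2 δ i).2 (hΦ hδ) hs

/-! ### Condition 2 implies condition 3 -/

lemma two_to_three (Ψ Φ : Finset Formula)
    (h2 : ∀ M : GLModel, ∃ S : Finset Formula, ∀ w : M.World,
      M.reflexiveFor w S → M.seqTrue w Ψ Φ) :
    ∀ (M : GLModel) (f : ℕ → M.World), (∀ i, M.R (f (i + 1)) (f i)) →
      ∃ i, ∀ j, i ≤ j → M.seqTrue (f j) Ψ Φ := by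
  intro M f hf
  obtain ⟨S, hS⟩ := h2 M
  have hRf : ∀ i j, i < j → M.R (f j) (f i) := by
    intro i j hij
    induction j with
    | zero => omega
    | succ j ih =>
        rcases Nat.lt_succ_iff_lt_or_eq.1 hij with h | h
        · exact M.trans (hf j) (ih h)
        · subst h; exact hf i
  -- a formula □α can fail reflexivity at most at one index along the chain
  have uniq : ∀ (α : Formula) (j k : ℕ),
      (M.sat (f j) (Formula.box α) ∧ ¬ M.sat (f j) α) →
      (M.sat (f k) (Formula.box α) ∧ ¬ M.sat (f k) α) → j = k := by
    intro α j k hj hk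
    rcases lt_trichotomy j k with h | h | h
    · exact absurd (hk.1 (f j) (hRf j k h)) hj.2
    · exact h
    · exact absurd (hj.1 (f k) (hRf k j h)) hk.2
  let N : Formula → ℕ := fun β =>
    if h : ∃ j, ∃ α : Formula, β = Formula.box α ∧
        M.sat (f j) β ∧ ¬ M.sat (f j) α then h.choose else 0
  refine ⟨S.sup N + 1, fun j hj => ?_⟩
  apply hS
  intro α hα hb
  by_contra hna
  have hex : ∃ j', ∃ α' : Formula, Formula.box α = Formula.box α' ∧
      M.sat (f j') (Formula.box α) ∧ ¬ M.sat (f j') α' := ⟨j, α, rfl, hb, hna⟩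
  have hspec := hex.choose_spec
  obtain ⟨α', heq, hsat', hnsat'⟩ := hspec
  have hαα : α' = α := by injection heq.symm
  rw [hαα] at hnsat'
  have hNe : N (Formula.box α) = hex.choose := by
    simp only [N]
    rw [dif_pos hex]
  have hjc : j = hex.choose := uniq α j hex.choose ⟨hb, hna⟩ ⟨hsat', hnsat'⟩
  have hle : N (Formula.box α) ≤ S.sup N := Finset.le_sup hα
  omega

/-! ### The main theorem -/

theorem gls_main_tfae' (Ψ Φ : Finset Formula) :
    List.TFAE
      [ ∃ S : Finset Formula, ∀ (M : GLModel) (w : M.World),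
          M.reflexiveFor w S → M.seqTrue w Ψ Φ,
        ∀ M : GLModel, ∃ S : Finset Formula, ∀ w : M.World,
          M.reflexiveFor w S → M.seqTrue w Ψ Φ,
        ∀ (M : GLModel) (f : ℕ → M.World), (∀ i, M.R (f (i + 1)) (f i)) →
          ∃ i, ∀ j, i ≤ j → M.seqTrue (f j) Ψ Φ,
        ∀ (M : GLModel) (f : ℕ → M.World), (∀ i, M.R (f (i + 1)) (f i)) →
          ∃ i, M.seqTrue (f i) Ψ Φ,
        GLSSeq false SeqLevel.two Ψ Φ,
        GLSSeq true SeqLevel.two Ψ Φ ] := by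
  tfae_have 1 → 2 := fun ⟨S, hS⟩ M => ⟨S, hS M⟩
  tfae_have 2 → 3 := two_to_three Ψ Φ
  tfae_have 3 → 4 := fun h M f hf => (h M f hf).imp fun i hi => hi i le_rfl
  tfae_have 4 → 5 := completeness Ψ Φ
  tfae_have 5 → 6 := GLSSeq.toTrue
  tfae_have 6 → 1 := fun h => soundness h
  tfae_finish

/-- Theorem (main theorem): for a second-level sequent Ψ ⇛ Φ, the six conditions
C1, C2, C3, C4, cut-free provability, and provability in GLS_seq are equivalent. -/
theorem gls_main_tfae (Ψ Φ : Finset Formula) :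
    List.TFAE
      [ ∃ S : Finset Formula, ∀ (M : GLModel) (w : M.World),
          M.reflexiveFor w S → M.seqTrue w Ψ Φ,
        ∀ M : GLModel, ∃ S : Finset Formula, ∀ w : M.World,
          M.reflexiveFor w S → M.seqTrue w Ψ Φ,
        ∀ (M : GLModel) (f : ℕ → M.World), (∀ i, M.R (f (i + 1)) (f i)) →
          ∃ i, ∀ j, i ≤ j → M.seqTrue (f j) Ψ Φ,
        ∀ (M : GLModel) (f : ℕ → M.World), (∀ i, M.R (f (i + 1)) (f i)) →
          ∃ i, M.seqTrue (f i) Ψ Φ,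
        GLSSeq false SeqLevel.two Ψ Φ,
        GLSSeq true SeqLevel.two Ψ Φ ] := by
  exact gls_main_tfae' Ψ Φ
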